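/- In a DAG G, if u and v are non-adjacent and v is a non-descendant of u, then the set pa(u) of parents of u d-separates u from v. -/

import Mathlib

/-- A directed graph (given by its edge relation) is acyclic. -/
def Acyclic {V : Type*} (E : V → V → Prop) : Prop :=
  ∀ v, ¬ Relation.TransGen E v v

/-- `b` is a collider between consecutive path vertices `a, b, c`:
both edges point into `b`. -/
def Collider {V : Type*} (E : V → V → Prop) (a b c : V) : Prop :=
  E a b ∧ E c b

/-- Descendants of `u` (including `u` itself): reachable by a directed path. -/
def Desc {V : Type*} (E : V → V → Prop) (u : V) : Set V :=
  {w | Relation.ReflTransGen E u w}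

/-- Ancestors of some vertex of `W`, excluding `W` itself: `an(W)`. -/
def anc {V : Type*} (E : V → V → Prop) (W : Set V) : Set V :=
  {x | x ∉ W ∧ ∃ w ∈ W, Relation.TransGen E x w}

/-- `An(W) = W ∪ an(W)`. -/
def Anc {V : Type*} (E : V → V → Prop) (W : Set V) : Set V :=
  W ∪ anc E W

/-- `l` is an (undirected) path from `u` to `v` in the directed graph `E`:
a duplicate-free list of vertices starting at `u`, ending at `v`,
with consecutive vertices joined by an edge (in either direction). -/
def IsPath {V : Type*} (E : V → V → Prop) (u v : V) (l : List V) : Prop :=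
  l.Chain' (fun a b => E a b ∨ E b a) ∧ l.head? = some u ∧ l.getLast? = some v ∧ l.Nodup

/-- The set of intermediate (interior) vertices of a path `l`:
vertices having a predecessor and successor on `l`. -/
def Interior {V : Type*} (l : List V) : Set V :=
  {b | ∃ a c, [a, b, c] <:+: l}

/-- The path `l` is blocked (d-separated) by `S`: it contains a non-collider
vertex in `S`, or a collider vertex `b` such that neither `b` nor any
descendant of `b` is in `S`. -/
def Blocked {V : Type*} (E : V → V → Prop) (l : List V) (S : Set V) : Prop :=
  ∃ a b c, [a, b, c] <:+: l ∧
    ((¬ Collider E a b c ∧ b ∈ S) ∨ (Collider E a b c ∧ ∀ w ∈ Desc E b, w ∉ S))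

/-- `u` and `v` are d-separated by `S`: every path between them is blocked. -/
def DSep {V : Type*} (E : V → V → Prop) (u v : V) (S : Set V) : Prop :=
  ∀ l, IsPath E u v l → Blocked E l S

/-- Sets `A` and `B` are d-separated by `S`. -/
def DSepSet {V : Type*} (E : V → V → Prop) (A B S : Set V) : Prop :=
  ∀ u ∈ A, ∀ v ∈ B, DSep E u v S

/-- The union of the tree nodes in the subtree on the `i`-side after
removing the tree edge `{i, j}`. -/
def SubtreeVerts {V ι : Type*} (T : SimpleGraph ι) (C : ι → Set V) (i j : ι) : Set V :=
  ⋃ k ∈ {k | (T.deleteEdges {s(i, j)}).Reachable i k}, C k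

/-- `T` (with node sets `C`) is a d-separation tree for the DAG `E`:
`T` is a tree, the node sets cover `V`, and for each tree edge the separator
`C i ∩ C j` d-separates the remaining vertices of the two subtrees. -/
def IsDSepTree {V ι : Type*} (E : V → V → Prop) (T : SimpleGraph ι) (C : ι → Set V) : Prop :=
  T.IsTree ∧ (⋃ i, C i) = Set.univ ∧
    ∀ i j, T.Adj i j →
      DSepSet E (SubtreeVerts T C i j \ (C i ∩ C j))
        (SubtreeVerts T C j i \ (C i ∩ C j)) (C i ∩ C j)

/-- Auxiliary: along a chain that starts with a forward edge into a descendant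
of `u` and ends at `v` (not a descendant of `u`), there is a collider which is
a descendant of `u`. -/
lemma find_collider {V : Type*} (E : V → V → Prop) (u v : V)
    (hnd : ¬ Relation.TransGen E u v) :
    ∀ (rest : List V) (a b : V),
      List.Chain' (fun x y => E x y ∨ E y x) (a :: b :: rest) →
      E a b → Relation.TransGen E u b →
      (a :: b :: rest).getLast? = some v →
      ∃ p q r, [p, q, r] <:+: (a :: b :: rest) ∧ E p q ∧ E r q ∧
        Relation.TransGen E u q := by
  intro rest
  induction rest with
  | nil =>
      intro a b _ _ hub hlast
      simp at hlast
      exact absurd (hlast ▸ hub) hnd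
  | cons c rest' ih =>
      intro a b hchain hab hub hlast
      replace hchain := List.isChain_cons_cons.mp hchain
      obtain ⟨_, hchain'⟩ := hchain
      rcases (List.isChain_cons_cons.mp hchain').1 with hbc | hcb
      · -- recurse
        have hlast' : (b :: c :: rest').getLast? = some v := by
          rwa [List.getLast?_cons_cons] at hlast
        obtain ⟨p, q, r, hinf, h1, h2, h3⟩ :=
          ih b c hchain' hbc (hub.tail hbc) hlast'
        exact ⟨p, q, r, List.infix_cons hinf, h1, h2, h3⟩
      · -- collider at b
        exact ⟨a, b, c, ⟨[], rest', rfl⟩, hab, hcb, hub⟩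

/-- in a DAG, if `u` and `v` are non-adjacent and `v` is a
non-descendant of `u`, then the parents of `u` d-separate `u` from `v`. -/
theorem stmt_7 {V : Type*} (E : V → V → Prop) (hG : Acyclic E)
    (u v : V) (hne : u ≠ v) (huv : ¬ E u v) (hvu : ¬ E v u)
    (hnd : ¬ Relation.TransGen E u v) :
    DSep E u v {x | E x u} := by
  intro l hl
  obtain ⟨hchain, hhead, hlast, hnodup⟩ := hl
  -- l = u :: b :: rest
  obtain ⟨l', rfl⟩ : ∃ l', l = u :: l' := by
    cases l with
    | nil => simp at hhead
    | cons x l' => simp at hhead; exact ⟨l', by rw [hhead]⟩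
  cases l' with
  | nil => simp at hlast; exact absurd hlast hne
  | cons b rest =>
    have hub : (E u b ∨ E b u) := (List.isChain_cons_cons.mp hchain).1
    have hchain' := (List.isChain_cons_cons.mp hchain).2
    have hbv : b ≠ v := by
      rintro rfl
      rcases hub with h | h
      exacts [huv h, hvu h]
    cases rest with
    | nil => simp at hlast; exact absurd hlast hbv
    | cons c rest' =>
      rcases hub with hub | hbu
      · -- forward edge: find a collider
        obtain ⟨p, q, r, hinf, h1, h2, h3⟩ :=
          find_collider E u v hnd (c :: rest') u b hchain hub
            (Relation.TransGen.single hub) hlast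
        refine ⟨p, q, r, hinf, Or.inr ⟨⟨h1, h2⟩, ?_⟩⟩
        intro w hw hwS
        exact hG u (((h3.trans_left hw).tail hwS))
      · -- b is a parent of u, and a non-collider on the path
        refine ⟨u, b, c, ⟨[], rest', rfl⟩, Or.inl ⟨?_, hbu⟩⟩
        rintro ⟨hub', -⟩
        exact hG u ((Relation.TransGen.single hub').tail hbu)
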